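/- Let m = kn + 1 with k ≥ 1 and n ≥ 2 (so gcd(m,n)=1). Let σ be a word of n S's and m W's, suppose the set R of m+n nonnegative integers with 0 ∈ R is compatible with σ, with sorted sequence 𝔯_1<…<𝔯_{m+n}, and define f_0 = 1 and f_i = σ^{-1}(W_{f_{i−1}}) for 1 ≤ i ≤ k+1. Then 𝔯_{f_k + 1} = m and |R ∩ {0,1,…,m+n}| = f_{k+1}. -/

import Mathlib

/-- The list of ranks of the lattice points visited by a path (excluding the final
point), starting from rank `r`.  A `true` entry is a north (`u`) step, which adds `m`
to the rank; a `false` entry is an east (`d`) step, which subtracts `n`. -/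
def rankWalk (m n : ℤ) : List Bool → ℤ → List ℤ
  | [], _ => []
  | b :: bs, r => r :: rankWalk m n bs (r + if b then m else -n)

/-- An `(m,n)`-path: a word of `n` north steps (`true`) and `m` east steps (`false`). -/
def IsPathWord (m n : ℕ) (P : List Bool) : Prop :=
  P.length = m + n ∧ P.count true = n

/-- An `(m,n)`-Dyck path: an `(m,n)`-path all of whose ranks are nonnegative. -/
def IsDyckWord (m n : ℕ) (P : List Bool) : Prop :=
  IsPathWord m n P ∧ ∀ r ∈ rankWalk (m : ℤ) (n : ℤ) P 0, 0 ≤ r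

/-- The rank set of a path: the ranks of its `m+n` lattice points other than the endpoint. -/
def rankSet (m n : ℕ) (P : List Bool) : Finset ℤ :=
  (rankWalk (m : ℤ) (n : ℤ) P 0).toFinset

/-- `R` is the rank set of some `(m,n)`-path. -/
def IsRankSet (m n : ℕ) (R : Finset ℤ) : Prop :=
  ∃ P : List Bool, IsPathWord m n P ∧ rankSet m n P = R

/-- `R` is the rank set of some `(m,n)`-Dyck path. -/
def IsDyckRankSet (m n : ℕ) (R : Finset ℤ) : Prop :=
  ∃ P : List Bool, IsDyckWord m n P ∧ rankSet m n P = R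

/-- A set `R` of `m + n` nonnegative integers containing `0`, with sorted sequence
`𝔯_1 < ⋯ < 𝔯_{m+n}`, is compatible with the word `σ` (where `true` = `S`, `false` = `W`)
if `𝔯_{σ⁻¹(S_i)} + m ∈ R` for all `i` and `𝔯_{σ⁻¹(W_j)} - n ∈ R` for all `j`. -/
def Compatible (m n : ℕ) (σ : List Bool) (R : Finset ℤ) : Prop :=
  R.card = m + n ∧ (0 : ℤ) ∈ R ∧ (∀ r ∈ R, 0 ≤ r) ∧
    ∀ p ∈ σ.zip (R.sort (· ≤ ·)),
      (p.1 = true → p.2 + (m : ℤ) ∈ R) ∧ (p.1 = false → p.2 - (n : ℤ) ∈ R)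

/-- The 1-based position of the `j`-th (1-based) occurrence of the letter `b` in the
word `w`; e.g. `nthPos w false j` is the position `σ⁻¹(W_j)` of the `j`-th `W`. -/
def nthPos (w : List Bool) (b : Bool) (j : ℕ) : ℕ :=
  ((List.range w.length).filter (fun p => w.getD p (!b) == b)).getD (j - 1) 0 + 1

/-- The positions `f_0 = 1` and `f_i = σ⁻¹(W_{f_{i-1}})`. -/
def fseq (σ : List Bool) : ℕ → ℕ
  | 0 => 1
  | i + 1 => nthPos σ false (fseq σ i)

/-- `𝔯_i`, the `i`-th smallest element of `R` (1-based). -/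
def sortedRank (R : Finset ℤ) (i : ℕ) : ℤ :=
  (R.sort (· ≤ ·)).getD (i - 1) 0

/-- `δ(R) = |R ∩ {0, 1, …, m+n}|`. -/
def deltaStat (m n : ℕ) (R : Finset ℤ) : ℕ :=
  (R.filter (fun r => 0 ≤ r ∧ r ≤ (m : ℤ) + n)).card


lemma sorted_countP_getElem {α} [LinearOrder α] {l : List α} (h : l.Pairwise (· < ·))
    (j : ℕ) (hj : j < l.length) :
    l.countP (fun y => decide (y ≤ l[j])) = j + 1 := by
  obtain ⟨x, hx⟩ : ∃ x, l[j] = x := ⟨_, rfl⟩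
  rw [hx]
  rw [show l.countP (fun y => decide (y ≤ x)) =
    (l.take (j+1) ++ l.drop (j+1)).countP (fun y => decide (y ≤ x)) from by
      rw [List.take_append_drop]]
  rw [List.countP_append]
  have h1 : (l.take (j+1)).countP (fun y => decide (y ≤ x)) = j + 1 := by
    rw [List.countP_eq_length.2, List.length_take]
    · omega
    · intro a ha
      rw [List.mem_take_iff_getElem] at ha
      obtain ⟨i, hi, rfl⟩ := ha
      simp only [List.getElem_take, decide_eq_true_eq]
      subst hx
      rcases eq_or_lt_of_le (by omega : i ≤ j) with rfl | hlt
      · exact le_of_eq (by congr 1)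
      · exact le_of_lt (h.rel_get_of_lt
          (by simpa using hlt : (⟨i, by omega⟩ : Fin l.length) < ⟨j, hj⟩))
  have h2 : (l.drop (j+1)).countP (fun y => decide (y ≤ x)) = 0 := by
    rw [List.countP_eq_zero]
    intro a ha
    rw [List.mem_drop_iff_getElem] at ha
    obtain ⟨i, hi, rfl⟩ := ha
    simp only [decide_eq_true_eq, not_le]
    subst hx
    exact h.rel_get_of_lt (by simp only [Fin.mk_lt_mk]; omega : (⟨j, hj⟩ : Fin l.length) < ⟨j+1+i, by omega⟩)
  omega

lemma sorted_getD_countP {α} [LinearOrder α] {l : List α} (h : l.Pairwise (· < ·))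
    {y : α} (hy : y ∈ l) (d : α) :
    l.getD (l.countP (fun z => decide (z ≤ y)) - 1) d = y := by
  obtain ⟨j, hj, rfl⟩ := List.mem_iff_getElem.1 hy
  rw [sorted_countP_getElem h j hj]
  simp [List.getD_eq_getElem?_getD, List.getElem?_eq_getElem hj]

lemma eq_zero_of_dvd_of_abs_lt {N d : ℤ} (hN : 0 < N) (hdvd : N ∣ d) (h : |d| < N) : d = 0 := by
  obtain ⟨t, rfl⟩ := hdvd
  have h1 : N * |t| < N := by rwa [abs_mul, abs_of_pos hN] at h
  have h2 : |t| < 1 := by nlinarith [abs_nonneg t]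
  have h3 : -1 < t ∧ t < 1 := abs_lt.1 h2
  have ht : t = 0 := by omega
  simp [ht]

lemma dvd_sub_of_mod_eq' {N a b : ℤ} (h : a % N = b % N) : N ∣ b - a :=
  Int.ModEq.dvd h

lemma mod_sub_self' (a b : ℤ) : (a - b) % b = a % b := by
  simp [Int.sub_emod]

lemma mod_add_self' (a b : ℤ) : (a + b) % b = a % b := by
  simp [Int.add_emod]

lemma countP_range_getD {α} (l : List α) (d : α) (p : α → Bool) :
    (List.range l.length).countP (fun i => p (l.getD i d)) = l.countP p := by
  induction l with
  | nil => simp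
  | cons x t ih =>
    rw [List.length_cons, List.range_succ_eq_map, List.countP_cons, List.countP_cons,
      List.countP_map]
    simp only [List.getD_cons_zero, List.getD_cons_succ, Function.comp_def]
    rw [← ih]

lemma nodup_filter_card {α} [DecidableEq α] (l : List α) (hl : l.Nodup) (p : α → Bool) :
    (l.filter p).toFinset.card = l.countP p := by
  rw [List.toFinset_card_of_nodup (hl.filter p), List.countP_eq_length_filter]

lemma mod_sub_mod' (a b N : ℤ) : (a - b % N) % N = (a - b) % N := by
  rw [Int.sub_emod, Int.emod_emod_of_dvd _ dvd_rfl, ← Int.sub_emod]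

lemma sorted_getD_lt_of_lt {l : List ℤ} (h : l.Pairwise (· < ·)) {i j : ℕ}
    (hij : i < j) (hj : j < l.length) : l.getD i 0 < l.getD j 0 := by
  rw [List.getD_eq_getElem l 0 (by omega : i < l.length), List.getD_eq_getElem l 0 hj]
  exact h.rel_get_of_lt (show (⟨i, by omega⟩ : Fin l.length) < ⟨j, hj⟩ by
    simp only [Fin.mk_lt_mk]; omega)

lemma sorted_getD_inj {l : List ℤ} (h : l.Pairwise (· < ·)) {i j : ℕ}
    (hi : i < l.length) (hj : j < l.length) (heq : l.getD i 0 = l.getD j 0) : i = j := by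
  rcases lt_trichotomy i j with hlt | hEq | hgt
  · exact absurd heq (ne_of_lt (sorted_getD_lt_of_lt h hlt hj))
  · exact hEq
  · exact absurd heq.symm (ne_of_lt (sorted_getD_lt_of_lt h hgt hi))

lemma sorted_getD_le_of_le {l : List ℤ} (h : l.Pairwise (· < ·)) {i j : ℕ}
    (hij : i ≤ j) (hj : j < l.length) : l.getD i 0 ≤ l.getD j 0 := by
  rcases eq_or_lt_of_le hij with rfl | hlt
  · exact le_refl _
  · exact le_of_lt (sorted_getD_lt_of_lt h hlt hj)

section Core

variable {m n : ℕ} {σ : List Bool} {R : Finset ℤ}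

lemma compat_core (hn : 2 ≤ n) (hnm : (n:ℤ) < m) (hm1 : (m:ℤ) % (n:ℤ) = 1)
    (hlen : σ.length = m + n) (hcount : σ.count true = n)
    (hcomp : Compatible m n σ R) :
    (∀ r ∈ R, r - (n:ℤ) ∉ R → r + (m:ℤ) ∈ R) ∧
    (∀ r ∈ R, r - (n:ℤ) ∉ R → ∀ y ∈ R, y % (n:ℤ) = r % (n:ℤ) → r ≤ y) ∧
    (R.filter (fun r => r - (n:ℤ) ∉ R)).card = n ∧
    (∀ p : ℕ, p < m + n → (σ.getD p true = false ↔ ((R.sort (·≤·)).getD p 0) - (n:ℤ) ∈ R)) := by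
  obtain ⟨hcard, h0, hpos, hzip⟩ := hcomp
  have hnz : (0:ℤ) < n := by exact_mod_cast (by omega : 0 < n)
  set L := R.sort (· ≤ ·) with hLdef
  have hLlen : L.length = m + n := by rw [Finset.length_sort, hcard]
  have hsorted : L.Pairwise (· < ·) := R.sortedLT_sort.pairwise
  have hmemL : ∀ a : ℤ, a ∈ L ↔ a ∈ R := fun a => Finset.mem_sort _
  -- compatibility at each position
  have compat' : ∀ p : ℕ, p < m + n →
      (σ.getD p true = true → L.getD p 0 + (m:ℤ) ∈ R) ∧
      (σ.getD p true = false → L.getD p 0 - (n:ℤ) ∈ R) := by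
    intro p hp
    have hpσ : p < σ.length := by omega
    have hpL : p < L.length := by omega
    have hpz : p < (σ.zip L).length := by rw [List.length_zip]; omega
    have hmem : (σ[p], L[p]) ∈ σ.zip L := by
      have hz : (σ.zip L)[p] = (σ[p], L[p]) := List.getElem_zip ..
      rw [← hz]; exact List.getElem_mem hpz
    have hcp := hzip _ hmem
    rw [List.getD_eq_getElem σ true hpσ, List.getD_eq_getElem L 0 hpL]
    exact hcp
  -- index function
  set f : ℤ → ℕ := fun r => L.countP (fun z => decide (z ≤ r)) - 1 with hfdef
  have hcntpos : ∀ r ∈ R, 0 < L.countP (fun z => decide (z ≤ r)) := by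
    intro r hr
    rw [List.countP_pos_iff]
    exact ⟨r, (hmemL r).2 hr, by simp⟩
  have hflt : ∀ r ∈ R, f r < m + n := by
    intro r hr
    have h1 := List.countP_le_length (l := L) (p := fun z => decide (z ≤ r))
    have h2 := hcntpos r hr
    simp only [hfdef]
    omega
  have hfgetD : ∀ r ∈ R, L.getD (f r) 0 = r := by
    intro r hr
    exact sorted_getD_countP hsorted ((hmemL r).2 hr) 0
  -- HB
  have HB : ∀ r ∈ R, r - (n:ℤ) ∉ R → r + (m:ℤ) ∈ R := by
    intro r hr hmin
    cases hb : σ.getD (f r) true with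
    | false =>
      exfalso; apply hmin
      have := (compat' (f r) (hflt r hr)).2 hb
      rwa [hfgetD r hr] at this
    | true =>
      have := (compat' (f r) (hflt r hr)).1 hb
      rwa [hfgetD r hr] at this
  -- nonempty residue classes, and their minima
  have hminP : ∀ j : ℤ, ∀ hne : (R.filter (fun y => y % (n:ℤ) = j)).Nonempty,
      (R.filter (fun y => y % (n:ℤ) = j)).min' hne ∈ R ∧
      (R.filter (fun y => y % (n:ℤ) = j)).min' hne % (n:ℤ) = j ∧
      (R.filter (fun y => y % (n:ℤ) = j)).min' hne - (n:ℤ) ∉ R := by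
    intro j hne
    have hmem := Finset.mem_filter.1 (Finset.min'_mem _ hne)
    refine ⟨hmem.1, hmem.2, ?_⟩
    intro hcon
    have hmem2 : (R.filter (fun y => y % (n:ℤ) = j)).min' hne - n ∈
        R.filter (fun y => y % (n:ℤ) = j) := by
      rw [Finset.mem_filter]
      exact ⟨hcon, by rw [mod_sub_self', hmem.2]⟩
    have := Finset.min'_le _ _ hmem2
    omega
  have hcls : ∀ j : ℕ, j < n → ∃ r ∈ R, r % (n:ℤ) = (j:ℤ) := by
    intro j
    induction j with
    | zero => intro _; exact ⟨0, h0, by simp⟩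
    | succ j ih =>
      intro hj
      obtain ⟨r, hr, hrmod⟩ := ih (by omega)
      have hne : (R.filter (fun y => y % (n:ℤ) = (j:ℤ))).Nonempty :=
        ⟨r, Finset.mem_filter.2 ⟨hr, hrmod⟩⟩
      obtain ⟨hMR, hMmod, hMP⟩ := hminP (j:ℤ) hne
      refine ⟨_ + (m:ℤ), HB _ hMR hMP, ?_⟩
      rw [Int.add_emod, hMmod, hm1,
        Int.emod_eq_of_lt (by positivity) (by exact_mod_cast hj)]
      push_cast; ring
  -- the set of class minima
  set P := R.filter (fun r => r - (n:ℤ) ∉ R) with hPdef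
  set gmin : ℕ → ℤ := fun j =>
    if h : (R.filter (fun y => y % (n:ℤ) = (j:ℤ))).Nonempty
    then (R.filter (fun y => y % (n:ℤ) = (j:ℤ))).min' h else 0 with hgdef
  have hgmin : ∀ j : ℕ, j < n → gmin j ∈ R ∧ gmin j % (n:ℤ) = (j:ℤ) ∧ gmin j ∈ P := by
    intro j hj
    obtain ⟨r, hr, hrmod⟩ := hcls j hj
    have hne : (R.filter (fun y => y % (n:ℤ) = (j:ℤ))).Nonempty :=
      ⟨r, by rw [Finset.mem_filter]; exact ⟨hr, hrmod⟩⟩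
    obtain ⟨h1, h2, h3⟩ := hminP (j:ℤ) hne
    simp only [hgdef, dif_pos hne]
    exact ⟨h1, h2, by rw [hPdef, Finset.mem_filter]; exact ⟨h1, h3⟩⟩
  have hginj : ∀ j ∈ Finset.range n, ∀ j' ∈ Finset.range n,
      gmin j = gmin j' → j = j' := by
    intro j hj j' hj' heq
    rw [Finset.mem_range] at hj hj'
    have h1 := (hgmin j hj).2.1
    have h2 := (hgmin j' hj').2.1
    rw [heq, h2] at h1
    exact_mod_cast h1.symm
  have hPge : n ≤ P.card := by
    have := Finset.card_le_card_of_injOn gmin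
      (fun j hj => (hgmin j (Finset.mem_range.1 hj)).2.2)
      (fun j hj j' hj' h => hginj j hj j' hj' h)
    simpa using this
  -- true positions
  have hTmem : ∀ q : ℕ, q ∈ ((List.range σ.length).filter
      (fun q => σ.getD q true == true)).toFinset ↔ q < m + n ∧ σ.getD q true = true := by
    intro q
    rw [List.mem_toFinset, List.mem_filter, List.mem_range, beq_iff_eq, hlen]
  set T := ((List.range σ.length).filter (fun q => σ.getD q true == true)).toFinset with hTdef
  have hTcard : T.card = n := by
    rw [hTdef, nodup_filter_card _ List.nodup_range _,
      countP_range_getD σ true (fun b => b == true)]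
    rw [← hcount]
    congr 1
  have hfmapsT : ∀ r ∈ P, f r ∈ T := by
    intro r hr
    rw [hPdef, Finset.mem_filter] at hr
    rw [hTmem]
    refine ⟨hflt r hr.1, ?_⟩
    cases hb : σ.getD (f r) true with
    | false =>
      exfalso; apply hr.2
      have := (compat' (f r) (hflt r hr.1)).2 hb
      rwa [hfgetD r hr.1] at this
    | true => rfl
  have hfinj : ∀ r ∈ P, ∀ r' ∈ P, f r = f r' → r = r' := by
    intro r hr r' hr' heq
    rw [hPdef, Finset.mem_filter] at hr hr'
    rw [← hfgetD r hr.1, ← hfgetD r' hr'.1, heq]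
  have hPle : P.card ≤ n := by
    rw [← hTcard]
    exact Finset.card_le_card_of_injOn f hfmapsT hfinj
  have hPcard : P.card = n := le_antisymm hPle hPge
  -- every true position holds a class minimum
  have hchar : ∀ p : ℕ, p < m + n → (σ.getD p true = false ↔ L.getD p 0 - (n:ℤ) ∈ R) := by
    intro p hp
    constructor
    · exact (compat' p hp).2
    · intro hmem
      cases hb : σ.getD p true with
      | false => rfl
      | true =>
        exfalso
        have hpT : p ∈ T := by rw [hTmem]; exact ⟨hp, hb⟩
        obtain ⟨r, hrP, hreq⟩ := Finset.surj_on_of_inj_on_of_card_le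
          (s := P) (t := T) (fun r _ => f r) (fun r hr => hfmapsT r hr)
          (fun r r' hr hr' h => hfinj r hr r' hr' h) (by omega) p hpT
        rw [hPdef, Finset.mem_filter] at hrP
        apply hrP.2
        rwa [hreq, hfgetD r hrP.1] at hmem
  -- HC : minima are class minima
  have HC : ∀ r ∈ R, r - (n:ℤ) ∉ R → ∀ y ∈ R, y % (n:ℤ) = r % (n:ℤ) → r ≤ y := by
    intro r hr hrmin y hy hmod
    have hrP : r ∈ P := by rw [hPdef, Finset.mem_filter]; exact ⟨hr, hrmin⟩
    obtain ⟨j, hj, hreq⟩ := Finset.surj_on_of_inj_on_of_card_le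
      (s := Finset.range n) (t := P) (fun j _ => gmin j)
      (fun j hj => (hgmin j (Finset.mem_range.1 hj)).2.2)
      (fun j j' hj hj' h => hginj j hj j' hj' h)
      (by simp [hPcard]) r hrP
    rw [Finset.mem_range] at hj
    have hgm := hgmin j hj
    have hne : (R.filter (fun y => y % (n:ℤ) = (j:ℤ))).Nonempty :=
      ⟨r, by rw [Finset.mem_filter]; rw [hreq]; exact ⟨hgm.1, hgm.2.1⟩⟩
    have hyC : y ∈ R.filter (fun y => y % (n:ℤ) = (j:ℤ)) := by
      rw [Finset.mem_filter]
      refine ⟨hy, ?_⟩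
      rw [hmod, hreq, hgm.2.1]
    have hle := Finset.min'_le _ y hyC
    rw [hreq]
    calc gmin j = _ := by simp only [hgdef, dif_pos hne]
    _ ≤ y := hle
  exact ⟨HB, HC, hPcard, hchar⟩

end Core

section Struct

set_option maxHeartbeats 1000000

variable {m n : ℕ} {R : Finset ℤ}

lemma classAP (hn0 : (0:ℤ) < n)
    (HC : ∀ r ∈ R, r - (n:ℤ) ∉ R → ∀ y ∈ R, y % (n:ℤ) = r % (n:ℤ) → r ≤ y) :
    ∀ t : ℕ, ∀ y ∈ R, ∀ z : ℤ, y - z = (n:ℤ) * t →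
      (∃ w ∈ R, w % (n:ℤ) = y % (n:ℤ) ∧ w ≤ z) → z ∈ R := by
  intro t
  induction t with
  | zero =>
    intro y hy z hz _
    have h0' : y - z = 0 := by simpa using hz
    have : z = y := by omega
    rwa [this]
  | succ t ih =>
    intro y hy z hzeq hw
    obtain ⟨w, hwR, hwmod, hwz⟩ := hw
    have hnt0 : (0:ℤ) ≤ (n:ℤ) * t := by positivity
    have hzeq' : y - z = (n:ℤ) * t + n := by push_cast at hzeq ⊢; linarith
    by_cases hyn : y - (n:ℤ) ∈ R
    · exact ih (y - n) hyn z (by linarith) ⟨w, hwR, by rw [hwmod, mod_sub_self'], hwz⟩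
    · exfalso
      have hyw := HC y hy hyn w hwR (by rw [hwmod])
      linarith

lemma struct (hn : 2 ≤ n) (hnm : (n:ℤ) < m) (hm1 : (m:ℤ) % (n:ℤ) = 1)
    (hcard : R.card = m + n) (h0 : (0:ℤ) ∈ R) (hpos : ∀ r ∈ R, 0 ≤ r)
    (HB : ∀ r ∈ R, r - (n:ℤ) ∉ R → r + (m:ℤ) ∈ R)
    (HC : ∀ r ∈ R, r - (n:ℤ) ∉ R → ∀ y ∈ R, y % (n:ℤ) = r % (n:ℤ) → r ≤ y)
    (hPcard : (R.filter (fun r => r - (n:ℤ) ∉ R)).card = n) :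
    (∀ M ∈ R, M - (n:ℤ) ∉ R → ∀ y ∈ R, y % (n:ℤ) = (M + (m:ℤ)) % (n:ℤ) → y ≤ M + m) ∧
    (∀ r ∈ R, ∃ M ∈ R, M - (n:ℤ) ∉ R ∧ (M + (m:ℤ)) % (n:ℤ) = r % (n:ℤ)) := by
  have hnz : (0:ℤ) < n := by exact_mod_cast (by omega : 0 < n)
  have hnne : (n:ℤ) ≠ 0 := by omega
  set P := R.filter (fun r => r - (n:ℤ) ∉ R) with hPdef
  have hPmem : ∀ M, M ∈ P ↔ M ∈ R ∧ M - (n:ℤ) ∉ R := by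
    intro M; rw [hPdef, Finset.mem_filter]
  have hselfmem : ∀ r ∈ R, r ∈ R.filter (fun y => y % (n:ℤ) = r % (n:ℤ)) :=
    fun r hr => Finset.mem_filter.2 ⟨hr, rfl⟩
  have hclsne : ∀ r ∈ R, (R.filter (fun y => y % (n:ℤ) = r % (n:ℤ))).Nonempty :=
    fun r hr => ⟨r, hselfmem r hr⟩
  -- minima of classes
  have hmnn : ∀ r ∈ R, ∃ M, M ∈ P ∧ M % (n:ℤ) = r % (n:ℤ) ∧ M ≤ r := by
    intro r hr
    have hne := hclsne r hr
    set M := (R.filter (fun y => y % (n:ℤ) = r % (n:ℤ))).min' hne with hM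
    have hmem : M ∈ R.filter (fun y => y % (n:ℤ) = r % (n:ℤ)) := Finset.min'_mem _ hne
    rw [Finset.mem_filter] at hmem
    have hle : M ≤ r := Finset.min'_le _ r (hselfmem r hr)
    refine ⟨M, ?_, hmem.2, hle⟩
    rw [hPmem]
    refine ⟨hmem.1, fun hcon => ?_⟩
    have hmem2 : M - n ∈ R.filter (fun y => y % (n:ℤ) = r % (n:ℤ)) :=
      Finset.mem_filter.2 ⟨hcon, by rw [mod_sub_self', hmem.2]⟩
    have := Finset.min'_le _ _ hmem2
    omega
  -- maxima of classes
  have hmxx : ∀ r ∈ R, ∃ X, X ∈ R ∧ X % (n:ℤ) = r % (n:ℤ) ∧ r ≤ X ∧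
      (∀ y ∈ R, y % (n:ℤ) = r % (n:ℤ) → y ≤ X) := by
    intro r hr
    have hne := hclsne r hr
    set X := (R.filter (fun y => y % (n:ℤ) = r % (n:ℤ))).max' hne with hX
    have hmem : X ∈ R.filter (fun y => y % (n:ℤ) = r % (n:ℤ)) := Finset.max'_mem _ hne
    rw [Finset.mem_filter] at hmem
    exact ⟨X, hmem.1, hmem.2, Finset.le_max' _ r (hselfmem r hr),
      fun y hy hmod => Finset.le_max' _ y (Finset.mem_filter.2 ⟨hy, hmod⟩ :
        y ∈ R.filter (fun w => w % (n:ℤ) = r % (n:ℤ)))⟩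
  have Puniq : ∀ M₁ ∈ P, ∀ M₂ ∈ P, M₁ % (n:ℤ) = M₂ % (n:ℤ) → M₁ = M₂ := by
    intro M₁ h1 M₂ h2 hmod
    rw [hPmem] at h1 h2
    exact le_antisymm (HC M₁ h1.1 h1.2 M₂ h2.1 hmod.symm) (HC M₂ h2.1 h2.2 M₁ h1.1 hmod)
  -- cardinality of a class
  have F4 : ∀ M ∈ P, ∀ X : ℤ, X ∈ R → X % (n:ℤ) = M % (n:ℤ) →
      (∀ y ∈ R, y % (n:ℤ) = M % (n:ℤ) → y ≤ X) →
      (n:ℤ) * ((R.filter (fun y => y % (n:ℤ) = M % (n:ℤ))).card : ℤ) = X - M + n := by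
    intro M hM X hxR hxmod hxmax
    have hMP := hM
    rw [hPmem] at hM
    obtain ⟨hMR, hMmin⟩ := hM
    obtain ⟨t2, ht2⟩ : (n:ℤ) ∣ X - M := dvd_sub_of_mod_eq' hxmod.symm
    have hxle : M ≤ X := HC M hMR hMmin X hxR hxmod
    have ht2nn : 0 ≤ t2 := by nlinarith
    have himg : R.filter (fun y => y % (n:ℤ) = M % (n:ℤ))
        = (Finset.range (t2.toNat + 1)).image (fun t : ℕ => M + (n:ℤ) * t) := by
      apply Finset.ext
      intro y
      rw [Finset.mem_filter, Finset.mem_image]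
      constructor
      · rintro ⟨hyR, hymod⟩
        obtain ⟨t1, ht1⟩ : (n:ℤ) ∣ y - M := dvd_sub_of_mod_eq' hymod.symm
        have hyM : M ≤ y := HC M hMR hMmin y hyR hymod
        have hymax : y ≤ X := hxmax y hyR hymod
        have ht1nn : 0 ≤ t1 := by nlinarith
        have ht1le : t1 ≤ t2 := by nlinarith
        refine ⟨t1.toNat, Finset.mem_range.2 (by omega), ?_⟩
        rw [Int.toNat_of_nonneg ht1nn]
        omega
      · rintro ⟨t, ht, rfl⟩
        rw [Finset.mem_range] at ht
        have htle : (t:ℤ) ≤ t2 := by omega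
        have hmod : (M + (n:ℤ) * t) % (n:ℤ) = M % (n:ℤ) := by
          rw [Int.add_mul_emod_self_left]
        refine ⟨?_, hmod⟩
        apply classAP hnz HC (t2 - t).toNat X hxR
        · rw [Int.toNat_of_nonneg (by omega)]
          have : X = M + (n:ℤ) * t2 := by omega
          rw [this]; push_cast; ring
        · exact ⟨M, hMR, hxmod.symm, by nlinarith⟩
    rw [himg, Finset.card_image_of_injOn, Finset.card_range]
    · push_cast [Int.toNat_of_nonneg ht2nn]
      linarith
    · intro a _ b _ hab
      simp only at hab
      have h1 : (n:ℤ) * a = (n:ℤ) * b := by linarith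
      have h2 := mul_left_cancel₀ hnne h1
      exact_mod_cast h2
  -- partition of R into classes indexed by minima
  have hdisj : ∀ M₁ ∈ P, ∀ M₂ ∈ P, M₁ ≠ M₂ →
      Disjoint (R.filter (fun y => y % (n:ℤ) = M₁ % (n:ℤ)))
        (R.filter (fun y => y % (n:ℤ) = M₂ % (n:ℤ))) := by
    intro M₁ h1 M₂ h2 hne
    rw [Finset.disjoint_left]
    intro a ha1 ha2
    rw [Finset.mem_filter] at ha1 ha2
    exact hne (Puniq M₁ h1 M₂ h2 (by rw [← ha1.2, ← ha2.2]))
  have hcover : R = P.biUnion (fun M => R.filter (fun y => y % (n:ℤ) = M % (n:ℤ))) := by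
    apply Finset.ext
    intro r
    rw [Finset.mem_biUnion]
    constructor
    · intro hr
      obtain ⟨M, hMP, hMmod, _⟩ := hmnn r hr
      exact ⟨M, hMP, Finset.mem_filter.2 ⟨hr, hMmod.symm⟩⟩
    · rintro ⟨M, _, hmem⟩
      exact (Finset.mem_filter.1 hmem).1
  have hsum1 : ∑ M ∈ P, ((R.filter (fun y => y % (n:ℤ) = M % (n:ℤ))).card) = m + n := by
    rw [← Finset.card_biUnion hdisj, ← hcover, hcard]
  -- the next-minimum map
  set π : ℤ → ℤ := fun M =>
    if h : M + (m:ℤ) ∈ R then (hmnn (M + m) h).choose else 0 with hπdef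
  have hπ : ∀ M ∈ P, π M ∈ P ∧ π M % (n:ℤ) = (M + m) % (n:ℤ) ∧ π M ≤ M + m := by
    intro M hM
    rw [hPmem] at hM
    have hMm : M + (m:ℤ) ∈ R := HB M hM.1 hM.2
    have hspec := (hmnn (M + m) hMm).choose_spec
    simp only [hπdef, dif_pos hMm]
    exact hspec
  have hπinj : ∀ M₁ ∈ P, ∀ M₂ ∈ P, π M₁ = π M₂ → M₁ = M₂ := by
    intro M₁ h1 M₂ h2 heq
    have e1 := (hπ M₁ h1).2.1
    have e2 := (hπ M₂ h2).2.1
    rw [heq, e2] at e1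
    have h4 := Int.ModEq.sub_right (m:ℤ) (show Int.ModEq n (M₂+m) (M₁+m) from e1)
    have h3 : M₂ % (n:ℤ) = M₁ % (n:ℤ) := by simpa [Int.ModEq] using h4
    exact (Puniq M₂ h2 M₁ h1 h3).symm
  have himg : P.image π = P := by
    apply Finset.eq_of_subset_of_card_le
    · intro y hy
      obtain ⟨M, hM, rfl⟩ := Finset.mem_image.1 hy
      exact (hπ M hM).1
    · rw [Finset.card_image_of_injOn (fun a ha b hb h => hπinj a ha b hb h)]
  have hπsurj : ∀ M' ∈ P, ∃ M ∈ P, π M = M' := by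
    intro M' hM'
    rw [← himg] at hM'
    exact Finset.mem_image.1 hM'
  -- the sum argument
  set g : ℤ → ℤ := fun M' => (n:ℤ) * ((R.filter (fun y => y % (n:ℤ) = M' % (n:ℤ))).card : ℤ)
    with hgdef
  have hgval : ∀ M ∈ P, ∀ X : ℤ, X ∈ R → X % (n:ℤ) = M % (n:ℤ) →
      (∀ y ∈ R, y % (n:ℤ) = M % (n:ℤ) → y ≤ X) → g M = X - M + n := by
    intro M hM X h1 h2 h3
    simp only [hgdef]
    exact F4 M hM X h1 h2 h3
  have hgbound : ∀ M ∈ P, M + (m:ℤ) - π M + n ≤ g (π M) := by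
    intro M hM
    obtain ⟨hπP, hπmod, hπle⟩ := hπ M hM
    rw [hPmem] at hM
    have hMm : M + (m:ℤ) ∈ R := HB M hM.1 hM.2
    obtain ⟨X, hxR, hxmod, hxge, hxmax⟩ := hmxx (M + m) hMm
    have hgeq : g (π M) = X - π M + n := by
      apply hgval (π M) hπP X hxR
      · rw [hxmod, hπmod]
      · intro y hy hmod
        exact hxmax y hy (by rw [hmod, hπmod])
    omega
  have hsumπ : ∑ M ∈ P, π M = ∑ M ∈ P, M := by
    conv_rhs => rw [← himg]
    rw [Finset.sum_image (fun a ha b hb h => hπinj a ha b hb h)]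
  have hsumgπ : ∑ M ∈ P, g (π M) = ∑ M ∈ P, g M := by
    conv_rhs => rw [← himg]
    rw [Finset.sum_image (fun a ha b hb h => hπinj a ha b hb h)]
  have hsum_rhs : ∑ M ∈ P, g M = (n:ℤ) * (m + n) := by
    simp only [hgdef]
    rw [← Finset.mul_sum]
    congr 1
    rw [← Nat.cast_sum]
    exact_mod_cast congrArg (Nat.cast : ℕ → ℤ) hsum1
  have hsum_lhs : ∑ M ∈ P, (M + (m:ℤ) - π M + n) = (n:ℤ) * (m + n) := by
    calc ∑ M ∈ P, (M + (m:ℤ) - π M + n)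
        = ∑ M ∈ P, ((M - π M) + ((m:ℤ) + n)) :=
          Finset.sum_congr rfl (fun M _ => by ring)
      _ = ∑ M ∈ P, (M - π M) + P.card • ((m:ℤ) + n) := by
          rw [Finset.sum_add_distrib, Finset.sum_const]
      _ = (∑ M ∈ P, M - ∑ M ∈ P, π M) + P.card • ((m:ℤ) + n) := by
          rw [Finset.sum_sub_distrib]
      _ = (n:ℤ) * (m + n) := by
          rw [hsumπ, sub_self, zero_add, hPcard, nsmul_eq_mul]
  have hpt : ∀ M ∈ P, M + (m:ℤ) - π M + n = g (π M) := by
    have := (Finset.sum_eq_sum_iff_of_le hgbound).1 (by rw [hsumgπ, hsum_rhs, hsum_lhs])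
    exact fun M hM => this M hM
  -- the key consequence: any class maximum of the class of M + m equals M + m
  have hkey : ∀ M ∈ P, ∀ X : ℤ, X ∈ R → X % (n:ℤ) = (M + (m:ℤ)) % (n:ℤ) →
      (∀ y ∈ R, y % (n:ℤ) = (M + (m:ℤ)) % (n:ℤ) → y ≤ X) → X = M + m := by
    intro M hM X h1 h2 h3
    obtain ⟨hπP, hπmod, hπle⟩ := hπ M hM
    have hgeq : g (π M) = X - π M + n := by
      apply hgval (π M) hπP X h1
      · rw [h2, hπmod]
      · intro y hy hmod
        exact h3 y hy (by rw [hmod, hπmod])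
    have := hpt M hM
    omega
  constructor
  · intro M hMR hMmin y hy hmod
    have hMP : M ∈ P := (hPmem M).2 ⟨hMR, hMmin⟩
    have hMm : M + (m:ℤ) ∈ R := HB M hMR hMmin
    obtain ⟨X, hxR, hxmod, hxge, hxmax⟩ := hmxx (M + m) hMm
    have hXeq : X = M + m := hkey M hMP X hxR hxmod hxmax
    have := hxmax y hy hmod
    omega
  · intro r hr
    obtain ⟨M', hM'P, hM'mod, _⟩ := hmnn r hr
    obtain ⟨M, hMP, hπM⟩ := hπsurj M' hM'P
    have hmod : (M + (m:ℤ)) % (n:ℤ) = r % (n:ℤ) := by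
      rw [← (hπ M hMP).2.1, hπM, hM'mod]
    rw [hPmem] at hMP
    exact ⟨M, hMP.1, hMP.2, hmod⟩

end Struct

set_option maxHeartbeats 2000000 in
/-- Let `m = kn + 1` with `k ≥ 1` and `n ≥ 2`.  If the set `R` is
compatible with the word `σ` of `n` `S`'s and `m` `W`'s, then `𝔯_{f_k + 1} = m` and
`|R ∩ {0, 1, …, m+n}| = f_{k+1}`, where `f_0 = 1` and `f_i = σ⁻¹(W_{f_{i-1}})`. -/
theorem compatible_delta_kn_plus_one (m n k : ℕ) (hk : 1 ≤ k) (hn : 2 ≤ n)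
    (hm : m = k * n + 1) (σ : List Bool) (hlen : σ.length = m + n)
    (hcount : σ.count true = n) (R : Finset ℤ) (hcomp : Compatible m n σ R) :
    sortedRank R (fseq σ k + 1) = (m : ℤ) ∧ deltaStat m n R = fseq σ (k + 1) := by
  obtain ⟨hcard, h0, hpos, hzip⟩ := hcomp
  have hnz : (0:ℤ) < n := by exact_mod_cast (by omega : 0 < n)
  have hnne : (n:ℤ) ≠ 0 := by omega
  have hmZ : (m:ℤ) = k * n + 1 := by exact_mod_cast congrArg (Nat.cast : ℕ → ℤ) hm
  have hkZ : (1:ℤ) ≤ k := by exact_mod_cast hk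
  have hnm : (n:ℤ) < m := by nlinarith
  have hm1 : (m:ℤ) % (n:ℤ) = 1 := by
    rw [hmZ, add_comm, Int.add_mul_emod_self_right]
    exact Int.emod_eq_of_lt (by omega) (by omega)
  obtain ⟨HB, HC, hPcard, hchar⟩ := compat_core hn hnm hm1 hlen hcount ⟨hcard, h0, hpos, hzip⟩
  obtain ⟨S2, S3⟩ := struct hn hnm hm1 hcard h0 hpos HB HC hPcard
  -- notation
  set L := R.sort (· ≤ ·) with hLdef
  have hLlen : L.length = m + n := by rw [Finset.length_sort, hcard]
  have hsorted : L.Pairwise (· < ·) := R.sortedLT_sort.pairwise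
  have hmemL : ∀ a : ℤ, a ∈ L ↔ a ∈ R := fun a => Finset.mem_sort _
  set cnt : ℤ → ℕ := fun x => (R.filter (fun r => r ≤ x)).card with hcntdef
  set cntW : ℤ → ℕ := fun x => (R.filter (fun r => r ≤ x ∧ r - (n:ℤ) ∈ R)).card with hcntWdef
  -- bridge : cnt as countP on L
  have hcntP : ∀ x : ℤ, cnt x = L.countP (fun z => decide (z ≤ x)) := by
    intro x
    simp only [hcntdef]
    rw [← nodup_filter_card L (Finset.sort_nodup _ _) (fun z => decide (z ≤ x))]
    congr 1
    apply Finset.ext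
    intro y
    rw [List.mem_toFinset, List.mem_filter, Finset.mem_filter, hmemL]
    simp
  have hcnt1 : ∀ x ∈ R, 1 ≤ cnt x := by
    intro x hx
    simp only [hcntdef]
    have : x ∈ R.filter (fun r => r ≤ x) := Finset.mem_filter.2 ⟨hx, le_refl x⟩
    exact Finset.card_pos.2 ⟨x, this⟩
  have hcntle : ∀ x : ℤ, cnt x ≤ m + n := by
    intro x
    simp only [hcntdef]
    rw [← hcard]
    exact Finset.card_le_card (Finset.filter_subset _ _)
  have hG0 : ∀ x ∈ R, L.getD (cnt x - 1) 0 = x := by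
    intro x hx
    rw [hcntP]
    exact sorted_getD_countP hsorted ((hmemL x).2 hx) 0
  have hcntmono : ∀ x y : ℤ, x ≤ y → cnt x ≤ cnt y := by
    intro x y hxy
    simp only [hcntdef]
    exact Finset.card_le_card (Finset.monotone_filter_right R (fun a _ ha => le_trans ha hxy))
  -- class minimum function
  have hselfmem : ∀ r ∈ R, r ∈ R.filter (fun y => y % (n:ℤ) = r % (n:ℤ)) :=
    fun r hr => Finset.mem_filter.2 ⟨hr, rfl⟩
  have hmnn : ∀ r ∈ R, ∃ M, (M ∈ R ∧ M - (n:ℤ) ∉ R) ∧ M % (n:ℤ) = r % (n:ℤ) ∧ M ≤ r := by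
    intro r hr
    have hne : (R.filter (fun y => y % (n:ℤ) = r % (n:ℤ))).Nonempty := ⟨r, hselfmem r hr⟩
    set M := (R.filter (fun y => y % (n:ℤ) = r % (n:ℤ))).min' hne with hM
    have hmem : M ∈ R.filter (fun y => y % (n:ℤ) = r % (n:ℤ)) := Finset.min'_mem _ hne
    rw [Finset.mem_filter] at hmem
    have hle : M ≤ r := Finset.min'_le _ r (hselfmem r hr)
    refine ⟨M, ⟨hmem.1, fun hcon => ?_⟩, hmem.2, hle⟩
    have hmem2 : M - n ∈ R.filter (fun y => y % (n:ℤ) = r % (n:ℤ)) :=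
      Finset.mem_filter.2 ⟨hcon, by rw [mod_sub_self', hmem.2]⟩
    have := Finset.min'_le _ _ hmem2
    omega
  have Puniq : ∀ M₁, (M₁ ∈ R ∧ M₁ - (n:ℤ) ∉ R) → ∀ M₂, (M₂ ∈ R ∧ M₂ - (n:ℤ) ∉ R) →
      M₁ % (n:ℤ) = M₂ % (n:ℤ) → M₁ = M₂ := by
    intro M₁ h1 M₂ h2 hmod
    exact le_antisymm (HC M₁ h1.1 h1.2 M₂ h2.1 hmod.symm) (HC M₂ h2.1 h2.2 M₁ h1.1 hmod)
  -- multiples of n in R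
  have hmult : ∀ j : ℕ, j ≤ k + 1 → ((j:ℤ) * n) ∈ R := by
    intro j hj
    obtain ⟨M', hM'R, hM'min, hM'mod⟩ := S3 0 h0
    have hXR : M' + (m:ℤ) ∈ R := HB M' hM'R hM'min
    have hX0 : (M' + (m:ℤ)) % n = 0 := by
      rw [hM'mod]; simp
    have hM'pos : 0 ≤ M' := hpos M' hM'R
    have hdvd : (n:ℤ) ∣ M' + 1 := by
      have e1 : (M' + (m:ℤ)) % n = (M' + 1) % n := by
        rw [Int.add_emod, Int.add_emod M' 1, hm1,
          Int.emod_eq_of_lt (by omega : (0:ℤ) ≤ 1) (by omega)]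
      rw [e1] at hX0
      exact Int.dvd_of_emod_eq_zero hX0
    have hM'ge : (n:ℤ) - 1 ≤ M' := by
      have := Int.le_of_dvd (by omega) hdvd
      omega
    have hXge : (m:ℤ) + n - 1 ≤ M' + m := by omega
    have hjn : ((j:ℤ)) * n ≤ M' + m := by
      have : ((j:ℤ)) * n ≤ ((k:ℤ)+1) * n := by
        have : (j:ℤ) ≤ (k:ℤ) + 1 := by exact_mod_cast hj
        nlinarith
      nlinarith
    have hjmod : ((j:ℤ) * n) % n = 0 := Int.mul_emod_left _ _
    obtain ⟨t, ht⟩ : (n:ℤ) ∣ (M' + m) - (j:ℤ) * n := by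
      apply dvd_sub_of_mod_eq'
      rw [hjmod, hX0]
    have htnn : 0 ≤ t := by nlinarith
    apply classAP hnz HC t.toNat (M' + m) hXR
    · rw [Int.toNat_of_nonneg htnn]; omega
    · exact ⟨0, h0, by simp [hX0], by positivity⟩
  have hmR : (m:ℤ) ∈ R := by
    have h1 : (0:ℤ) - n ∉ R := fun hc => by have := hpos _ hc; omega
    have := HB 0 h0 h1
    simpa using this
  have hmnR : (m:ℤ) + n ∉ R := by
    intro hc
    have h1 : (0:ℤ) - n ∉ R := fun hc2 => by have := hpos _ hc2; omega
    have h2 : ((m:ℤ) + n) % n = (0 + (m:ℤ)) % n := by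
      rw [mod_add_self', zero_add]
    have := S2 0 h0 h1 ((m:ℤ)+n) hc h2
    omega
  -- counting split lemmas
  have hsplit : ∀ A : ℤ, cnt (A + n) = cnt A +
      (R.filter (fun r => A < r ∧ r ≤ A + (n:ℤ))).card := by
    intro A
    simp only [hcntdef]
    have hun : R.filter (fun r => r ≤ A + (n:ℤ)) =
        R.filter (fun r => r ≤ A) ∪ R.filter (fun r => A < r ∧ r ≤ A + (n:ℤ)) := by
      apply Finset.ext
      intro r
      rw [Finset.mem_union, Finset.mem_filter, Finset.mem_filter, Finset.mem_filter]
      constructor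
      · rintro ⟨hr, hle⟩
        by_cases hA : r ≤ A
        · exact Or.inl ⟨hr, hA⟩
        · exact Or.inr ⟨hr, by omega, hle⟩
      · rintro (⟨hr, hle⟩ | ⟨hr, _, hle⟩)
        · exact ⟨hr, by omega⟩
        · exact ⟨hr, hle⟩
    rw [hun, Finset.card_union_of_disjoint]
    rw [Finset.disjoint_left]
    intro a ha1 ha2
    rw [Finset.mem_filter] at ha1 ha2
    omega
  have hsplit2 : ∀ x : ℤ, cnt x = cntW x +
      (R.filter (fun r => r ≤ x ∧ r - (n:ℤ) ∉ R)).card := by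
    intro x
    simp only [hcntdef, hcntWdef]
    have hun : R.filter (fun r => r ≤ x) =
        R.filter (fun r => r ≤ x ∧ r - (n:ℤ) ∈ R) ∪
        R.filter (fun r => r ≤ x ∧ r - (n:ℤ) ∉ R) := by
      apply Finset.ext
      intro r
      rw [Finset.mem_union, Finset.mem_filter, Finset.mem_filter, Finset.mem_filter]
      constructor
      · rintro ⟨hr, hle⟩
        by_cases hA : r - (n:ℤ) ∈ R
        · exact Or.inl ⟨hr, hle, hA⟩
        · exact Or.inr ⟨hr, hle, hA⟩
      · rintro (⟨hr, hle, _⟩ | ⟨hr, hle, _⟩) <;> exact ⟨hr, hle⟩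
    rw [hun, Finset.card_union_of_disjoint]
    rw [Finset.disjoint_left]
    intro a ha1 ha2
    rw [Finset.mem_filter] at ha1 ha2
    tauto
  -- the interval ↔ minima bijection
  have hbij : ∀ A : ℤ, 0 ≤ A → A % (n:ℤ) = 0 → A + n ≤ (m:ℤ) + n - 1 →
      (R.filter (fun r => A < r ∧ r ≤ A + (n:ℤ))).card
        = (R.filter (fun M => M < A + (n:ℤ) ∧ M - (n:ℤ) ∉ R)).card := by
    intro A hA0 hAmod hAub
    apply Finset.card_bij (fun r hr => (hmnn r (Finset.mem_filter.1 hr).1).choose)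
    · intro r hr
      obtain ⟨hrR, hrlb, hrub⟩ : r ∈ R ∧ A < r ∧ r ≤ A + (n:ℤ) := by
        have := Finset.mem_filter.1 hr; exact ⟨this.1, this.2.1, this.2.2⟩
      obtain ⟨⟨hMR, hMmin⟩, hMmod, hMle⟩ := (hmnn r hrR).choose_spec
      rw [Finset.mem_filter]
      refine ⟨hMR, ?_, hMmin⟩
      rcases eq_or_lt_of_le (le_trans hMle hrub) with heq | hlt
      · exfalso
        have hMmod0 : (hmnn r hrR).choose % (n:ℤ) = 0 := by
          rw [heq, Int.add_emod, hAmod]; simp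
        have := HC _ hMR hMmin 0 h0 (by simp [hMmod0])
        omega
      · exact hlt
    · intro r₁ h₁ r₂ h₂ heq
      obtain ⟨hr₁R, hb₁, hc₁⟩ : r₁ ∈ R ∧ A < r₁ ∧ r₁ ≤ A + (n:ℤ) := by
        have := Finset.mem_filter.1 h₁; exact ⟨this.1, this.2.1, this.2.2⟩
      obtain ⟨hr₂R, hb₂, hc₂⟩ : r₂ ∈ R ∧ A < r₂ ∧ r₂ ≤ A + (n:ℤ) := by
        have := Finset.mem_filter.1 h₂; exact ⟨this.1, this.2.1, this.2.2⟩
      obtain ⟨⟨hM₁R, hM₁min⟩, hM₁mod, hM₁le⟩ := (hmnn r₁ hr₁R).choose_spec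
      obtain ⟨⟨hM₂R, hM₂min⟩, hM₂mod, hM₂le⟩ := (hmnn r₂ hr₂R).choose_spec
      have hmodeq : r₁ % (n:ℤ) = r₂ % (n:ℤ) := by
        rw [← hM₁mod, heq, hM₂mod]
      have hd : (n:ℤ) ∣ r₂ - r₁ := dvd_sub_of_mod_eq' hmodeq
      have habs : |r₂ - r₁| < (n:ℤ) := abs_lt.2 ⟨by omega, by omega⟩
      have := eq_zero_of_dvd_of_abs_lt hnz hd habs
      omega
    · intro M hM
      rw [Finset.mem_filter] at hM
      obtain ⟨hMR, hMlt, hMmin⟩ := hM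
      set z := A + (n:ℤ) - ((A + (n:ℤ) - M) % n) with hz
      have hrem1 : 0 ≤ (A + (n:ℤ) - M) % n := Int.emod_nonneg _ hnne
      have hrem2 : (A + (n:ℤ) - M) % n < n := Int.emod_lt_of_pos _ hnz
      have hzlb : A < z := by omega
      have hzub : z ≤ A + (n:ℤ) := by omega
      have hzmod : z % (n:ℤ) = M % (n:ℤ) := by
        have e : A + (n:ℤ) - (A + (n:ℤ) - M) = M := by ring
        rw [hz, mod_sub_mod', e]
      have hdMz : (n:ℤ) ∣ M - z := dvd_sub_of_mod_eq' hzmod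
      have hMz : M ≤ z := by
        by_contra hcon
        push_neg at hcon
        have habs : |M - z| < (n:ℤ) := abs_lt.2 ⟨by omega, by omega⟩
        have := eq_zero_of_dvd_of_abs_lt hnz hdMz habs
        omega
      obtain ⟨M₂, hM₂R, hM₂min, hM₂mod⟩ := S3 M hMR
      have hXR : M₂ + (m:ℤ) ∈ R := HB M₂ hM₂R hM₂min
      have hM₂pos : 0 ≤ M₂ := hpos _ hM₂R
      have hzX : z ≤ M₂ + (m:ℤ) := by
        by_contra hcon
        push_neg at hcon
        obtain ⟨t, ht⟩ : (n:ℤ) ∣ z - (M₂ + (m:ℤ)) := by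
          apply dvd_sub_of_mod_eq'
          rw [hM₂mod, ← hzmod]
        have ht1 : 1 ≤ t := by nlinarith
        have : z ≥ M₂ + (m:ℤ) + n := by nlinarith
        omega
      have hzR : z ∈ R := by
        obtain ⟨t, ht⟩ : (n:ℤ) ∣ (M₂ + (m:ℤ)) - z := by
          apply dvd_sub_of_mod_eq'
          rw [hzmod, ← hM₂mod]
        have htnn : 0 ≤ t := by nlinarith
        apply classAP hnz HC t.toNat (M₂ + (m:ℤ)) hXR
        · rw [Int.toNat_of_nonneg htnn]; omega
        · exact ⟨M, hMR, by rw [hM₂mod], hMz⟩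
      refine ⟨z, Finset.mem_filter.2 ⟨hzR, hzlb, hzub⟩, ?_⟩
      obtain ⟨⟨hNR, hNmin⟩, hNmod, hNle⟩ := (hmnn z hzR).choose_spec
      exact Puniq _ ⟨hNR, hNmin⟩ M ⟨hMR, hMmin⟩ (by rw [hNmod, hzmod])
  -- ≤ vs < for minima below A + n when A ∈ R
  have hPfilter : ∀ A : ℤ, A ∈ R →
      R.filter (fun r => r ≤ A + (n:ℤ) ∧ r - (n:ℤ) ∉ R) =
      R.filter (fun r => r < A + (n:ℤ) ∧ r - (n:ℤ) ∉ R) := by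
    intro A hA
    apply Finset.ext
    intro r
    rw [Finset.mem_filter, Finset.mem_filter]
    constructor
    · rintro ⟨hr, hle, hmin⟩
      refine ⟨hr, ?_, hmin⟩
      rcases eq_or_lt_of_le hle with heq | h
      · exfalso; apply hmin; rw [heq]; simpa using hA
      · exact h
    · rintro ⟨hr, hlt, hmin⟩
      exact ⟨hr, le_of_lt hlt, hmin⟩
  have hstep : ∀ A : ℤ, 0 ≤ A → A % (n:ℤ) = 0 → A + n ≤ (m:ℤ) + n - 1 → A ∈ R →
      cntW (A + n) = cnt A := by
    intro A h1 h2 h3 h4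
    have e1 := hsplit A
    have e2 := hsplit2 (A + n)
    have e3 := hbij A h1 h2 h3
    have e4 := hPfilter A h4
    rw [e4] at e2
    omega
  -- the word bridge
  have hbridge : ∀ x ∈ R, x - (n:ℤ) ∈ R → nthPos σ false (cntW x) = cnt x := by
    intro x hx hxn
    set F := (List.range σ.length).filter (fun p => σ.getD p (!false) == false) with hF
    have hFsorted : F.Pairwise (· < ·) :=
      List.Pairwise.sublist List.filter_sublist List.pairwise_lt_range
    have hFmem : ∀ q : ℕ, q ∈ F ↔ (q < m + n ∧ σ.getD q true = false) := by
      intro q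
      rw [hF, List.mem_filter, List.mem_range, hlen]
      simp
    have hcnt1x := hcnt1 x hx
    have hcntlex := hcntle x
    have hp0lt : cnt x - 1 < m + n := by omega
    have hp0L : cnt x - 1 < L.length := by omega
    have hp0get : L.getD (cnt x - 1) 0 = x := hG0 x hx
    have hp0F : (cnt x - 1) ∈ F := by
      rw [hFmem]
      exact ⟨hp0lt, (hchar _ hp0lt).2 (by rw [hp0get]; exact hxn)⟩
    have hFnodup : F.Nodup := List.nodup_range.filter _
    have hcntW1 : 1 ≤ cntW x := by
      simp only [hcntWdef]
      apply Finset.card_pos.2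
      exact ⟨x, Finset.mem_filter.2 ⟨hx, le_refl x, hxn⟩⟩
    have hcountF : F.countP (fun q => decide (q ≤ cnt x - 1)) = cntW x := by
      rw [← nodup_filter_card F hFnodup]
      simp only [hcntWdef]
      apply Finset.card_bij (fun q hq => L.getD q 0)
      · intro q hq
        rw [List.mem_toFinset, List.mem_filter] at hq
        obtain ⟨hqF, hqle⟩ := hq
        rw [hFmem] at hqF
        have hqle' : q ≤ cnt x - 1 := by simpa using hqle
        rw [Finset.mem_filter]
        refine ⟨?_, ?_, ?_⟩
        · rw [← hmemL, List.getD_eq_getElem L 0 (by omega : q < L.length)]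
          exact List.getElem_mem _
        · rw [← hp0get]
          exact sorted_getD_le_of_le hsorted hqle' hp0L
        · exact (hchar q hqF.1).1 hqF.2
      · intro q₁ h₁ q₂ h₂ heq
        rw [List.mem_toFinset, List.mem_filter] at h₁ h₂
        have e₁ : q₁ < m + n := ((hFmem _).1 h₁.1).1
        have e₂ : q₂ < m + n := ((hFmem _).1 h₂.1).1
        exact sorted_getD_inj hsorted (by omega) (by omega) heq
      · intro r hr
        rw [Finset.mem_filter] at hr
        obtain ⟨hrR, hrx, hrn⟩ := hr
        have hq1 := hcnt1 r hrR
        have hqle := hcntmono r x hrx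
        have hqlt : cnt r - 1 < m + n := by have := hcntle r; omega
        refine ⟨cnt r - 1, ?_, hG0 r hrR⟩
        rw [List.mem_toFinset, List.mem_filter]
        constructor
        · rw [hFmem]
          exact ⟨hqlt, (hchar _ hqlt).2 (by rw [hG0 r hrR]; exact hrn)⟩
        · simp only [decide_eq_true_eq]
          omega
    have hgoal : F.getD (cntW x - 1) 0 = cnt x - 1 := by
      rw [← hcountF]
      exact sorted_getD_countP hFsorted hp0F 0
    have hnth : nthPos σ false (cntW x) = F.getD (cntW x - 1) 0 + 1 := by
      rw [nthPos, hF]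
    rw [hnth, hgoal]
    omega
  -- the main induction
  have hind : ∀ i : ℕ, i ≤ k + 1 → (((i:ℤ) * n) ∈ R ∧ cnt ((i:ℤ) * n) = fseq σ i) := by
    intro i
    induction i with
    | zero =>
      intro _
      constructor
      · simpa using h0
      · have hfilt : R.filter (fun r => r ≤ (0:ℤ)) = {0} := by
          apply Finset.ext
          intro r
          rw [Finset.mem_filter, Finset.mem_singleton]
          constructor
          · rintro ⟨hr, hle⟩
            have := hpos r hr
            omega
          · rintro rfl
            exact ⟨h0, le_refl 0⟩
        have e0 : ((0:ℕ):ℤ) * n = (0:ℤ) := by simp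
        rw [e0]
        simp only [hcntdef]
        rw [hfilt]
        simp [fseq]
    | succ i ih =>
      intro hik
      obtain ⟨hiR, hicnt⟩ := ih (by omega)
      set A := (i:ℤ) * n with hA
      have hA0 : 0 ≤ A := by positivity
      have hAmod : A % (n:ℤ) = 0 := Int.mul_emod_left _ _
      have hAub : A + n ≤ (m:ℤ) + n - 1 := by
        have h5 : (i:ℤ) + 1 ≤ (k:ℤ) + 1 := by exact_mod_cast hik
        have h6 : A + n ≤ ((k:ℤ)+1) * n := by rw [hA]; nlinarith
        nlinarith
      have hcast : ((i+1:ℕ):ℤ) * n = A + n := by push_cast; ring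
      have hmem : A + (n:ℤ) ∈ R := by
        have := hmult (i+1) (by omega)
        rwa [hcast] at this
      constructor
      · rwa [hcast]
      · rw [hcast]
        have e1 : cntW (A + n) = cnt A := hstep A hA0 hAmod hAub hiR
        have e2 : nthPos σ false (cntW (A+n)) = cnt (A+n) :=
          hbridge (A+n) hmem (by simpa using hiR)
        rw [show fseq σ (i+1) = nthPos σ false (fseq σ i) from rfl, ← hicnt, ← e1, e2]
  -- conclusion
  obtain ⟨hkR, hkcnt⟩ := hind k (by omega)
  obtain ⟨hk1R, hk1cnt⟩ := hind (k+1) (by omega)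
  have hkn : (k:ℤ) * n = (m:ℤ) - 1 := by linarith
  constructor
  · have hcm : cnt (m:ℤ) = fseq σ k + 1 := by
      have hun : R.filter (fun r => r ≤ (m:ℤ)) =
          R.filter (fun r => r ≤ (m:ℤ) - 1) ∪ {(m:ℤ)} := by
        apply Finset.ext
        intro r
        rw [Finset.mem_union, Finset.mem_filter, Finset.mem_filter, Finset.mem_singleton]
        constructor
        · rintro ⟨hr, hle⟩
          rcases eq_or_lt_of_le hle with heq | hlt
          · exact Or.inr heq
          · exact Or.inl ⟨hr, by omega⟩
        · rintro (⟨hr, hle⟩ | rfl)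
          · exact ⟨hr, by omega⟩
          · exact ⟨hmR, le_refl _⟩
      have hdisj : Disjoint (R.filter (fun r => r ≤ (m:ℤ) - 1)) ({(m:ℤ)} : Finset ℤ) := by
        rw [Finset.disjoint_left]
        intro a ha1 ha2
        rw [Finset.mem_filter] at ha1
        rw [Finset.mem_singleton] at ha2
        omega
      have : cnt (m:ℤ) = cnt ((m:ℤ) - 1) + 1 := by
        simp only [hcntdef]
        rw [hun, Finset.card_union_of_disjoint hdisj, Finset.card_singleton]
      rw [this, show (m:ℤ) - 1 = (k:ℤ) * n by omega, hkcnt]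
    rw [← hcm]
    show sortedRank R (cnt (m:ℤ)) = (m:ℤ)
    unfold sortedRank
    rw [← hLdef]
    exact hG0 (m:ℤ) hmR
  · have h1 : deltaStat m n R = cnt ((m:ℤ) + n) := by
      unfold deltaStat
      simp only [hcntdef]
      congr 1
      apply Finset.ext
      intro r
      rw [Finset.mem_filter, Finset.mem_filter]
      constructor
      · rintro ⟨hr, _, hle⟩
        exact ⟨hr, hle⟩
      · rintro ⟨hr, hle⟩
        exact ⟨hr, hpos r hr, hle⟩
    have h2 : cnt ((m:ℤ) + n) = cnt ((m:ℤ) + n - 1) := by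
      simp only [hcntdef]
      congr 1
      apply Finset.ext
      intro r
      rw [Finset.mem_filter, Finset.mem_filter]
      constructor
      · rintro ⟨hr, hle⟩
        refine ⟨hr, ?_⟩
        rcases eq_or_lt_of_le hle with heq | hlt
        · exfalso; rw [heq] at hr; exact hmnR hr
        · omega
      · rintro ⟨hr, hle⟩
        exact ⟨hr, by omega⟩
    have h3 : (m:ℤ) + n - 1 = ((k+1:ℕ):ℤ) * n := by push_cast; linarith
    rw [h1, h2, h3, hk1cnt]
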